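/- Let N_+ = N ∪ {n+1} and let 𝒫^{N_+} be the lattice of partitions of N_+ ordered by coarsening. Define f : ℰ^N → 𝒫^{N_+} by: if A ≠ ∅ and P = {A, B_1, …, B_{|P|−1}}, then f(A,P) = {A ∪ {n+1}, B_1, …, B_{|P|−1}}; and if A = ∅ and P = {B_1, …, B_{|P|}}, then f(∅,P) = {{n+1}, B_1, …, B_{|P|}}. Then f is a lattice isomorphism from ℰ^N onto 𝒫^{N_+}: f is a bijection and for all (A,P),(B,Q) ∈ ℰ^N, f((A,P) ⊓ (B,Q)) = f(A,P) ∧ f(B,Q) and f(cl((A,P) ⊔ (B,Q))) = f(A,P) ∨ f(B,Q). -/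

import Mathlib

open scoped BigOperators

/-- `modp n A` is the modular partition `P^A_⊥` of `Fin n` whose unique (possibly)
non-singleton block is `A`, all other blocks being singletons. -/
def modp (n : ℕ) (A : Set (Fin n)) : Setoid (Fin n) where
  r x y := x = y ∨ (x ∈ A ∧ y ∈ A)
  iseqv := by
    refine ⟨fun _ => Or.inl rfl, ?_, ?_⟩
    · rintro x y (rfl | ⟨hx, hy⟩)
      · exact Or.inl rfl
      · exact Or.inr ⟨hy, hx⟩
    · rintro x y z (rfl | ⟨hx, hy⟩) h
      · exact h
      · rcases h with rfl | ⟨hy', hz⟩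
        · exact Or.inr ⟨hx, hy⟩
        · exact Or.inr ⟨hx, hz⟩

/-- The product `X^N = 2^N × 𝒫^N` of the subset lattice and the partition lattice,
ordered componentwise. -/
abbrev XN (n : ℕ) := Set (Fin n) × Setoid (Fin n)

/-- The closure operator `cl` on `X^N`:  `cl(∅,P) = (∅,P)` and, for `A ≠ ∅`,
`cl(A,P) = (Ā, P ⊔ P^A_⊥)` where `Ā` is the block of `P ⊔ P^A_⊥` containing `A`. -/
def EmbClosure (n : ℕ) (x : XN n) : XN n :=
  ({y | ∃ a ∈ x.1, (x.2 ⊔ modp n x.1) y a}, x.2 ⊔ modp n x.1)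

/-- An embedded subset is a pair that coincides with its closure. -/
def IsEmbedded (n : ℕ) (x : XN n) : Prop := EmbClosure n x = x

/-- The lattice `ℰ^N` of embedded subsets, with the induced order. -/
abbrev Emb (n : ℕ) := {x : XN n // IsEmbedded n x}

lemma modp_le_of_subsingleton {n : ℕ} {A : Set (Fin n)} (h : A.Subsingleton)
    (Q : Setoid (Fin n)) : modp n A ≤ Q := by
  rw [Setoid.le_def]
  intro x y hxy
  rcases hxy with rfl | ⟨hx, hy⟩
  · exact Q.refl' x
  · obtain rfl := h hx hy
    exact Q.refl' x

lemma modp_eq_bot_of_subsingleton {n : ℕ} {A : Set (Fin n)} (h : A.Subsingleton) :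
    modp n A = ⊥ :=
  le_antisymm (modp_le_of_subsingleton h ⊥) bot_le

lemma embedded_empty (n : ℕ) (Q : Setoid (Fin n)) : IsEmbedded n (∅, Q) := by
  unfold IsEmbedded EmbClosure
  refine Prod.ext ?_ ?_
  · simp
  · simpa using sup_eq_left.mpr (modp_le_of_subsingleton Set.subsingleton_empty Q)

lemma embedded_univ_top (n : ℕ) : IsEmbedded n (Set.univ, ⊤) := by
  unfold IsEmbedded EmbClosure
  refine Prod.ext ?_ ?_
  · ext y
    simp only [Set.mem_setOf_eq, Set.mem_univ, iff_true]
    exact ⟨y, trivial, Setoid.refl' _ y⟩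
  · exact sup_eq_left.mpr le_top

lemma embedded_singleton (n : ℕ) (i : Fin n) : IsEmbedded n ({i}, ⊥) := by
  have hb : modp n ({i} : Set (Fin n)) = ⊥ :=
    modp_eq_bot_of_subsingleton Set.subsingleton_singleton
  unfold IsEmbedded EmbClosure
  refine Prod.ext ?_ ?_
  · ext y
    simp only [Set.mem_setOf_eq, hb, sup_idem, Set.mem_singleton_iff]
    constructor
    · rintro ⟨a, ha, hrel⟩
      change (⊥ ⊔ modp n ({i} : Set (Fin n))) y a at hrel
      rw [hb, sup_idem] at hrel
      subst ha
      first | exact hrel | simpa [Setoid.bot_def] using hrel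
    · rintro rfl
      exact ⟨y, rfl, Setoid.refl' _ y⟩
  · simp [hb]

/-- The bottom element `(∅, P_⊥)` of `ℰ^N`. -/
def botE (n : ℕ) : Emb n := ⟨(∅, ⊥), embedded_empty n ⊥⟩

/-- The top element `(N, P^⊤)` of `ℰ^N`. -/
def topE (n : ℕ) : Emb n := ⟨(Set.univ, ⊤), embedded_univ_top n⟩

/-- The atom `({i}, P_⊥)` of `ℰ^N`. -/
def atomS (n : ℕ) (i : Fin n) : Emb n := ⟨({i}, ⊥), embedded_singleton n i⟩

/-- The atom `(∅, [ij])` of `ℰ^N`, where `[ij]` is the atom of the partition lattice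
whose unique non-singleton block is the pair `{i, j}`. -/
def atomP (n : ℕ) (i j : Fin n) : Emb n := ⟨(∅, modp n {i, j}), embedded_empty n _⟩

/-- A pair is an atom candidate: of the form `({i},P_⊥)` or `(∅,[ij])` with `i ≠ j`. -/
def IsAtomPair (n : ℕ) (a : XN n) : Prop :=
  (∃ i : Fin n, a = ({i}, ⊥)) ∨ ∃ i j : Fin n, i ≠ j ∧ a = (∅, modp n {i, j})

/-- The number of blocks `|P|` of a partition. -/
noncomputable def numBlocks {α : Type*} (P : Setoid α) : ℕ := P.classes.ncard

/-- The rank function `r(A,P) = (n − |P|) + min{|A|,1}` of `ℰ^N`. -/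
noncomputable def erank (n : ℕ) (x : XN n) : ℕ := (n - numBlocks x.2) + min x.1.ncard 1

/-- The partition `Q^S` of `S` induced by a partition `Q` of `N`. -/
def indPart {n : ℕ} (S : Set (Fin n)) (Q : Setoid (Fin n)) : Setoid S :=
  Setoid.comap Subtype.val Q

/-- `mu` is the Möbius function of the (finite) poset `α`. -/
def IsMobius {α : Type*} [PartialOrder α] (mu : α → α → ℤ) : Prop :=
  (∀ x, mu x x = 1) ∧
  (∀ x y, ¬x ≤ y → mu x y = 0) ∧
  (∀ x y, x < y → mu x y = -∑ᶠ z ∈ Set.Ico x y, mu x z)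

def liftS (n : ℕ) (P : Setoid (Fin n)) : Setoid (Fin (n + 1)) where
  r a b := a = b ∨ ∃ a' b' : Fin n, a = a'.castSucc ∧ b = b'.castSucc ∧ P a' b'
  iseqv := by
    refine ⟨fun _ => Or.inl rfl, ?_, ?_⟩
    · rintro a b (rfl | ⟨a', b', rfl, rfl, h⟩)
      · exact Or.inl rfl
      · exact Or.inr ⟨b', a', rfl, rfl, P.symm' h⟩
    · rintro a b c (rfl | ⟨a', b', rfl, rfl, h⟩) h2
      · exact h2
      · rcases h2 with rfl | ⟨b'', c', hb, rfl, h'⟩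
        · exact Or.inr ⟨a', b', rfl, rfl, h⟩
        · obtain rfl := Fin.castSucc_injective _ hb
          exact Or.inr ⟨a', c', rfl, rfl, P.trans' h h'⟩

def fX (n : ℕ) (x : XN n) : Setoid (Fin (n + 1)) :=
  liftS n x.2 ⊔ modp (n + 1) (Fin.castSucc '' x.1 ∪ {Fin.last n})


section Aux

variable {n : ℕ}

local notation "cS" => Fin.castSucc
local notation "Ln" => Fin.last n

lemma fX_rel_lift {x : XN n} {a b : Fin n} (h : x.2 a b) :
    fX n x (cS a) (cS b) := by
  have : liftS n x.2 ≤ fX n x := le_sup_left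
  exact Setoid.le_def.mp this (Or.inr ⟨a, b, rfl, rfl, h⟩)

lemma fX_rel_last {x : XN n} {a : Fin n} (h : a ∈ x.1) :
    fX n x (cS a) Ln := by
  have hle : modp (n + 1) (cS '' x.1 ∪ {Ln}) ≤ fX n x := le_sup_right
  exact Setoid.le_def.mp hle (Or.inr ⟨Or.inl ⟨a, h, rfl⟩, Or.inr rfl⟩)

lemma modp_le_iff {m : ℕ} {A : Set (Fin m)} {R : Setoid (Fin m)} :
    modp m A ≤ R ↔ ∀ u ∈ A, ∀ v ∈ A, R u v := by
  constructor
  · intro h u hu v hv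
    exact Setoid.le_def.mp h (Or.inr ⟨hu, hv⟩)
  · intro h
    rw [Setoid.le_def]
    rintro u v (rfl | ⟨hu, hv⟩)
    · exact R.refl' u
    · exact h u hu v hv

lemma fX_le_iff {x : XN n} {R : Setoid (Fin (n + 1))} :
    fX n x ≤ R ↔
      (∀ a b, x.2 a b → R (cS a) (cS b)) ∧ (∀ a ∈ x.1, R (cS a) Ln) := by
  constructor
  · intro h
    exact ⟨fun a b hab => Setoid.le_def.mp h (fX_rel_lift hab),
      fun a ha => Setoid.le_def.mp h (fX_rel_last ha)⟩
  · rintro ⟨h1, h2⟩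
    refine sup_le ?_ ?_
    · rw [Setoid.le_def]
      rintro a b (rfl | ⟨a', b', rfl, rfl, hab⟩)
      · exact R.refl' a
      · exact h1 a' b' hab
    · have hL : ∀ u ∈ cS '' x.1 ∪ {Ln}, R u Ln := by
        rintro u (⟨a, ha, rfl⟩ | rfl)
        · exact h2 a ha
        · exact R.refl' _
      refine modp_le_iff.mpr fun u hu v hv => R.trans' (hL u hu) (R.symm' (hL v hv))

lemma fX_sup (x y : XN n) : fX n (x ⊔ y) = fX n x ⊔ fX n y := by
  refine le_antisymm ?_ (sup_le ?_ ?_)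
  · refine fX_le_iff.mpr ⟨?_, ?_⟩
    · intro a b hab
      have hcomap : x.2 ⊔ y.2 ≤ Setoid.comap cS (fX n x ⊔ fX n y) := by
        refine sup_le ?_ ?_
        · rw [Setoid.le_def]
          intro a b h
          exact (Setoid.comap_rel _ _ _ _).mpr
            (Setoid.le_def.mp (le_sup_left : fX n x ≤ _) (fX_rel_lift h))
        · rw [Setoid.le_def]
          intro a b h
          exact (Setoid.comap_rel _ _ _ _).mpr
            (Setoid.le_def.mp (le_sup_right : fX n y ≤ _) (fX_rel_lift h))
      exact (Setoid.comap_rel _ _ _ _).mp (Setoid.le_def.mp hcomap hab)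
    · rintro a (ha | ha)
      · exact Setoid.le_def.mp (le_sup_left : fX n x ≤ _) (fX_rel_last ha)
      · exact Setoid.le_def.mp (le_sup_right : fX n y ≤ _) (fX_rel_last ha)
  · refine fX_le_iff.mpr ⟨?_, ?_⟩
    · intro a b hab
      exact fX_rel_lift (Setoid.le_def.mp (le_sup_left : x.2 ≤ x.2 ⊔ y.2) hab)
    · intro a ha
      exact fX_rel_last (Or.inl ha : a ∈ x.1 ∪ y.1)
  · refine fX_le_iff.mpr ⟨?_, ?_⟩
    · intro a b hab
      exact fX_rel_lift (Setoid.le_def.mp (le_sup_right : y.2 ≤ x.2 ⊔ y.2) hab)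
    · intro a ha
      exact fX_rel_last (Or.inr ha : a ∈ x.1 ∪ y.1)

lemma fX_closure (z : XN n) : fX n (EmbClosure n z) = fX n z := by
  have hP2 : ∀ a b, (z.2 ⊔ modp n z.1) a b → fX n z (cS a) (cS b) := by
    have : z.2 ⊔ modp n z.1 ≤ Setoid.comap cS (fX n z) := by
      refine sup_le ?_ (modp_le_iff.mpr ?_)
      · rw [Setoid.le_def]
        intro a b h
        exact (Setoid.comap_rel _ _ _ _).mpr (fX_rel_lift h)
      · intro u hu v hv
        exact (Setoid.comap_rel _ _ _ _).mpr
          ((fX n z).trans' (fX_rel_last hu) ((fX n z).symm' (fX_rel_last hv)))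
    intro a b h
    exact (Setoid.comap_rel _ _ _ _).mp (Setoid.le_def.mp this h)
  refine le_antisymm (fX_le_iff.mpr ⟨hP2, ?_⟩) (fX_le_iff.mpr ⟨?_, ?_⟩)
  · rintro y ⟨a, ha, hrel⟩
    exact (fX n z).trans' (hP2 y a hrel) (fX_rel_last ha)
  · intro a b hab
    exact fX_rel_lift (Setoid.le_def.mp (le_sup_left : z.2 ≤ z.2 ⊔ modp n z.1) hab)
  · intro a ha
    exact fX_rel_last (x := EmbClosure n z) ⟨a, ha, (z.2 ⊔ modp n z.1).refl' a⟩

lemma emb_modp_le {x : XN n} (h : IsEmbedded n x) : modp n x.1 ≤ x.2 :=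
  sup_eq_left.mp (congrArg Prod.snd h)

lemma emb_hA2 {x : XN n} (h : IsEmbedded n x) {a b : Fin n}
    (ha : a ∈ x.1) (hb : b ∈ x.1) : x.2 a b :=
  Setoid.le_def.mp (emb_modp_le h) (Or.inr ⟨ha, hb⟩)

lemma emb_hA1 {x : XN n} (h : IsEmbedded n x) {y a : Fin n}
    (ha : a ∈ x.1) (hya : x.2 y a) : y ∈ x.1 := by
  have hfst := congrArg Prod.fst h
  have hsnd : x.2 ⊔ modp n x.1 = x.2 := congrArg Prod.snd h
  have : y ∈ ({w | ∃ a ∈ x.1, (x.2 ⊔ modp n x.1) w a} : Set (Fin n)) :=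
    ⟨a, ha, by rw [hsnd]; exact hya⟩
  rwa [show ({w | ∃ a ∈ x.1, (x.2 ⊔ modp n x.1) w a} : Set (Fin n)) = x.1 from hfst] at this

/-- The explicit description of `fX x` for embedded `x`, as a setoid. -/
def extE (x : XN n) (h : IsEmbedded n x) : Setoid (Fin (n + 1)) where
  r a b :=
    (∃ a' b', a = cS a' ∧ b = cS b' ∧ x.2 a' b') ∨
    (∃ a', a = cS a' ∧ b = Ln ∧ a' ∈ x.1) ∨
    (∃ b', a = Ln ∧ b = cS b' ∧ b' ∈ x.1) ∨ (a = Ln ∧ b = Ln)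
  iseqv := by
    constructor
    · intro a
      rcases Fin.eq_castSucc_or_eq_last a with ⟨j, rfl⟩ | rfl
      · exact Or.inl ⟨j, j, rfl, rfl, x.2.refl' j⟩
      · exact Or.inr (Or.inr (Or.inr ⟨rfl, rfl⟩))
    · rintro a b (⟨a', b', rfl, rfl, hr⟩ | ⟨a', rfl, rfl, ha⟩ | ⟨b', rfl, rfl, hb⟩ | ⟨rfl, rfl⟩)
      · exact Or.inl ⟨b', a', rfl, rfl, x.2.symm' hr⟩
      · exact Or.inr (Or.inr (Or.inl ⟨a', rfl, rfl, ha⟩))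
      · exact Or.inr (Or.inl ⟨b', rfl, rfl, hb⟩)
      · exact Or.inr (Or.inr (Or.inr ⟨rfl, rfl⟩))
    · have hne : ∀ i : Fin n, (cS i : Fin (n + 1)) ≠ Ln := fun i => (Fin.castSucc_lt_last i).ne
      rintro a b c
        (⟨a', b', rfl, rfl, hr⟩ | ⟨a', rfl, rfl, ha⟩ | ⟨b', rfl, rfl, hb⟩ | ⟨rfl, rfl⟩) h2
      · rcases h2 with ⟨b'', c', hb, rfl, hr'⟩ | ⟨b'', hb, rfl, hb'⟩ | ⟨c', hb, rfl, hc⟩ | ⟨hb, rfl⟩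
        · obtain rfl := Fin.castSucc_injective _ hb
          exact Or.inl ⟨a', c', rfl, rfl, x.2.trans' hr hr'⟩
        · obtain rfl := Fin.castSucc_injective _ hb
          exact Or.inr (Or.inl ⟨a', rfl, rfl, emb_hA1 h hb' hr⟩)
        · exact absurd hb (hne b')
        · exact absurd hb (hne b')
      · rcases h2 with ⟨b'', c', hb, rfl, hr'⟩ | ⟨b'', hb, rfl, hb'⟩ | ⟨c', _, rfl, hc⟩ | ⟨_, rfl⟩
        · exact absurd hb.symm (hne b'')
        · exact absurd hb.symm (hne b'')
        · exact Or.inl ⟨a', c', rfl, rfl, emb_hA2 h ha hc⟩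
        · exact Or.inr (Or.inl ⟨a', rfl, rfl, ha⟩)
      · rcases h2 with ⟨b'', c', heq, rfl, hr'⟩ | ⟨b'', heq, rfl, hb'⟩ | ⟨c', heq, rfl, hc⟩ | ⟨heq, rfl⟩
        · obtain rfl := Fin.castSucc_injective _ heq
          exact Or.inr (Or.inr (Or.inl ⟨c', rfl, rfl,
            emb_hA1 h hb (x.2.symm' hr')⟩))
        · obtain rfl := Fin.castSucc_injective _ heq
          exact Or.inr (Or.inr (Or.inr ⟨rfl, rfl⟩))
        · exact absurd heq (hne b')
        · exact absurd heq (hne b')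
      · rcases h2 with ⟨b'', c', hb, rfl, hr'⟩ | ⟨b'', hb, rfl, hb'⟩ | ⟨c', hb, rfl, hc⟩ | ⟨hb, rfl⟩
        · exact absurd hb.symm (hne b'')
        · exact absurd hb.symm (hne b'')
        · exact Or.inr (Or.inr (Or.inl ⟨c', rfl, rfl, hc⟩))
        · exact Or.inr (Or.inr (Or.inr ⟨rfl, rfl⟩))

lemma fX_le_extE {x : XN n} (h : IsEmbedded n x) : fX n x ≤ extE x h :=
  fX_le_iff.mpr
    ⟨fun a b hab => Or.inl ⟨a, b, rfl, rfl, hab⟩,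
     fun a ha => Or.inr (Or.inl ⟨a, rfl, rfl, ha⟩)⟩

lemma fX_rel_cc {x : XN n} (h : IsEmbedded n x) {a b : Fin n} :
    fX n x (cS a) (cS b) ↔ x.2 a b := by
  have hne : ∀ i : Fin n, (cS i : Fin (n + 1)) ≠ Ln := fun i => (Fin.castSucc_lt_last i).ne
  constructor
  · intro hr
    rcases Setoid.le_def.mp (fX_le_extE h) hr with
      ⟨a', b', ha, hb, hab⟩ | ⟨a', _, hb, _⟩ | ⟨b', ha, _, _⟩ | ⟨ha, _⟩
    · obtain rfl := Fin.castSucc_injective _ ha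
      obtain rfl := Fin.castSucc_injective _ hb
      exact hab
    · exact absurd hb (hne b)
    · exact absurd ha (hne a)
    · exact absurd ha (hne a)
  · exact fX_rel_lift

lemma fX_rel_cl {x : XN n} (h : IsEmbedded n x) {a : Fin n} :
    fX n x (cS a) Ln ↔ a ∈ x.1 := by
  have hne : ∀ i : Fin n, (cS i : Fin (n + 1)) ≠ Ln := fun i => (Fin.castSucc_lt_last i).ne
  constructor
  · intro hr
    rcases Setoid.le_def.mp (fX_le_extE h) hr with
      ⟨a', b', _, hb, _⟩ | ⟨a', ha, _, ha'⟩ | ⟨b', ha, _, _⟩ | ⟨ha, _⟩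
    · exact absurd hb.symm (hne b')
    · obtain rfl := Fin.castSucc_injective _ ha
      exact ha'
    · exact absurd ha (hne a)
    · exact absurd ha (hne a)
  · exact fX_rel_last

/-- The inverse map from partitions of `Fin (n+1)` to pairs. -/
def gX (n : ℕ) (R : Setoid (Fin (n + 1))) : XN n :=
  ({i | R i.castSucc (Fin.last n)}, Setoid.comap Fin.castSucc R)

lemma gX_embedded (R : Setoid (Fin (n + 1))) : IsEmbedded n (gX n R) := by
  have hsup : (gX n R).2 ⊔ modp n (gX n R).1 = (gX n R).2 := by
    refine sup_eq_left.mpr (modp_le_iff.mpr fun u hu v hv => ?_)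
    exact (Setoid.comap_rel _ _ _ _).mpr (R.trans' hu (R.symm' hv))
  unfold IsEmbedded EmbClosure
  refine Prod.ext ?_ hsup
  ext y
  simp only [Set.mem_setOf_eq]
  constructor
  · rintro ⟨a, ha, hya⟩
    rw [hsup] at hya
    exact R.trans' ((Setoid.comap_rel _ _ _ _).mp hya) ha
  · intro hy
    exact ⟨y, hy, ((gX n R).2 ⊔ modp n (gX n R).1).refl' y⟩

lemma fX_gX (R : Setoid (Fin (n + 1))) : fX n (gX n R) = R := by
  refine le_antisymm
    (fX_le_iff.mpr ⟨fun a b hab => (Setoid.comap_rel _ _ _ _).mp hab, fun a ha => ha⟩) ?_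
  rw [Setoid.le_def]
  intro a b hab
  rcases Fin.eq_castSucc_or_eq_last a with ⟨a', rfl⟩ | rfl <;>
    rcases Fin.eq_castSucc_or_eq_last b with ⟨b', rfl⟩ | rfl
  · exact fX_rel_lift ((Setoid.comap_rel _ _ _ _).mpr hab)
  · exact fX_rel_last (x := gX n R) hab
  · exact (fX n (gX n R)).symm' (fX_rel_last (x := gX n R) (R.symm' hab))
  · exact (fX n (gX n R)).refl' _

lemma gX_fX {x : XN n} (h : IsEmbedded n x) : gX n (fX n x) = x := by
  refine Prod.ext ?_ ?_
  · ext i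
    exact fX_rel_cl h
  · refine Setoid.ext fun a b => ?_
    rw [show ((gX n (fX n x)).2 a b) = ((Setoid.comap cS (fX n x)) a b) from rfl,
      Setoid.comap_rel]
    exact fX_rel_cc h

lemma embedded_inf {x y : XN n} (hx : IsEmbedded n x) (hy : IsEmbedded n y) :
    IsEmbedded n (x ⊓ y) := by
  have hmle : modp n (x ⊓ y).1 ≤ (x ⊓ y).2 := by
    refine modp_le_iff.mpr fun u hu v hv => ?_
    exact ⟨emb_hA2 hx hu.1 hv.1, emb_hA2 hy hu.2 hv.2⟩
  have hsup : (x ⊓ y).2 ⊔ modp n (x ⊓ y).1 = (x ⊓ y).2 := sup_eq_left.mpr hmle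
  unfold IsEmbedded EmbClosure
  refine Prod.ext ?_ hsup
  ext w
  simp only [Set.mem_setOf_eq]
  constructor
  · rintro ⟨a, ha, hwa⟩
    rw [hsup] at hwa
    exact ⟨emb_hA1 hx ha.1 hwa.1, emb_hA1 hy ha.2 hwa.2⟩
  · intro hw
    exact ⟨w, hw, ((x ⊓ y).2 ⊔ modp n (x ⊓ y).1).refl' w⟩

end Aux

theorem iso_with_partitions (n : ℕ) (hn : 1 ≤ n) :
    Function.Bijective (fun x : Emb n => fX n x.val) ∧
    (∀ x y : Emb n, fX n (x.val ⊓ y.val) = fX n x.val ⊓ fX n y.val) ∧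
    (∀ x y : Emb n, fX n (EmbClosure n (x.val ⊔ y.val)) = fX n x.val ⊔ fX n y.val) := by
  refine ⟨⟨?_, ?_⟩, ?_, ?_⟩
  · intro x y h
    have h' : fX n x.val = fX n y.val := h
    refine Subtype.ext ?_
    calc x.val = gX n (fX n x.val) := (gX_fX x.2).symm
      _ = gX n (fX n y.val) := by rw [h']
      _ = y.val := gX_fX y.2
  · intro R
    exact ⟨⟨gX n R, gX_embedded R⟩, fX_gX R⟩
  · intro x y
    have hz : IsEmbedded n (x.val ⊓ y.val) := embedded_inf x.2 y.2
    refine Setoid.ext fun a b => ?_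
    have hrhs : (fX n x.val ⊓ fX n y.val) a b ↔ fX n x.val a b ∧ fX n y.val a b := Iff.rfl
    rw [hrhs]
    have hsymm : ∀ (R : Setoid (Fin (n + 1))) (u v : Fin (n + 1)), R u v ↔ R v u :=
      fun R u v => ⟨R.symm', R.symm'⟩
    rcases Fin.eq_castSucc_or_eq_last a with ⟨a', rfl⟩ | rfl <;>
      rcases Fin.eq_castSucc_or_eq_last b with ⟨b', rfl⟩ | rfl
    · rw [fX_rel_cc hz, fX_rel_cc x.2, fX_rel_cc y.2]
      exact Iff.rfl
    · rw [fX_rel_cl hz, fX_rel_cl x.2, fX_rel_cl y.2]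
      exact Iff.rfl
    · rw [hsymm (fX n (x.val ⊓ y.val)), hsymm (fX n x.val), hsymm (fX n y.val),
        fX_rel_cl hz, fX_rel_cl x.2, fX_rel_cl y.2]
      exact Iff.rfl
    · constructor
      · intro _
        exact ⟨(fX n x.val).refl' _, (fX n y.val).refl' _⟩
      · intro _
        exact (fX n (x.val ⊓ y.val)).refl' _
  · intro x y
    rw [fX_closure, fX_sup]
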